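/- arXiv:1503.01689 — 2 statements merged into one kernel-verified Lean document; each statement's English description precedes it below -/
import Mathlib

section
/- Let n be a measurable kernel with |n(x,y)| ≤ β(y) a.e., β ∈ L¹, and let N be the induced integral operator (Nu)(x) = ∫ n(x, x−y) u(y) dy on L∞(ℝᶜ, ℝ). Then ess sup_x ∫ |n(x,y)| dy ≤ ‖N : L∞ → L∞‖. -/
open MeasureTheory
open scoped ENNReal

private lemma clamp_abs_le (t : ℝ) : |max (-1) (min 1 t)| ≤ 1 :=
  abs_le.2 ⟨le_max_left _ _, max_le (by norm_num) (min_le_left _ _)⟩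

private lemma clamp_lipschitz (a b : ℝ) :
    |max (-1) (min 1 a) - max (-1) (min 1 b)| ≤ |a - b| := by
  rw [max_comm (-1) (min 1 a), max_comm (-1) (min 1 b)]
  refine (abs_max_sub_max_le_abs _ _ _).trans ?_
  refine (abs_min_sub_min_le_max 1 a 1 b).trans ?_
  simp only [sub_self, abs_zero]
  exact le_of_eq (max_eq_right (abs_nonneg _))

private lemma clamp_eq {t : ℝ} (h : |t| ≤ 1) : max (-1) (min 1 t) = t := by
  rw [min_eq_right (abs_le.1 h).2, max_eq_right (abs_le.1 h).1]

set_option maxHeartbeats 1000000 in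
set_option synthInstance.maxHeartbeats 400000 in
theorem stmt7 (c : ℕ)
    (β : (Fin c → ℝ) → ℝ) (hβ : Integrable β)
    (n : (Fin c → ℝ) × (Fin c → ℝ) → ℝ) (hn : Measurable n)
    (hdom : ∀ᵐ z ∂(volume : Measure ((Fin c → ℝ) × (Fin c → ℝ))), |n z| ≤ β z.2)
    (N : Lp ℝ ⊤ (volume : Measure (Fin c → ℝ)) →L[ℝ] Lp ℝ ⊤ volume)
    (hN : ∀ u : Lp ℝ ⊤ (volume : Measure (Fin c → ℝ)),
      ⇑(N u) =ᵐ[volume] fun x => ∫ y, n (x, x - y) * u y) :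
    essSup (fun x => ENNReal.ofReal (∫ y, |n (x, y)|)) (volume : Measure (Fin c → ℝ))
      ≤ ENNReal.ofReal ‖N‖ := by
  classical
  haveI : Fact ((1:ℝ≥0∞) ≤ 1) := ⟨le_refl _⟩
  haveI : Fact ((1:ℝ≥0∞) ≠ ∞) := ⟨ENNReal.one_ne_top⟩
  obtain ⟨S, hSc, hSd⟩ :=
    TopologicalSpace.exists_countable_dense (Lp ℝ 1 (volume : Measure (Fin c → ℝ)))
  -- clamped L∞ elements
  have hclampC : Continuous fun t : ℝ => max (-1) (min 1 t) :=
    continuous_const.max (continuous_const.min continuous_id)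
  have hUmem : ∀ v : Lp ℝ 1 (volume : Measure (Fin c → ℝ)),
      MemLp (fun y => max (-1) (min 1 (v y))) ⊤ (volume : Measure (Fin c → ℝ)) := by
    intro v
    refine memLp_top_of_bound (hclampC.comp_aestronglyMeasurable (Lp.aestronglyMeasurable v)) 1 ?_
    exact Filter.Eventually.of_forall fun y => by
      simpa [Real.norm_eq_abs] using clamp_abs_le (v y)
  set U : Lp ℝ 1 (volume : Measure (Fin c → ℝ)) → Lp ℝ ⊤ (volume : Measure (Fin c → ℝ)) :=
    fun v => (hUmem v).toLp _ with hU
  have hUcoe : ∀ v, ⇑(U v) =ᵐ[(volume : Measure (Fin c → ℝ))]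
      fun y => max (-1) (min 1 (v y)) := fun v => (hUmem v).coeFn_toLp
  have hUnorm : ∀ v, ‖U v‖ ≤ 1 := by
    intro v
    rw [hU]
    rw [Lp.norm_toLp]
    have h1 : eLpNorm (fun y => max (-1) (min 1 (v y))) ⊤ (volume : Measure (Fin c → ℝ))
        ≤ ENNReal.ofReal 1 := by
      refine le_trans (eLpNorm_le_of_ae_bound (C := 1) ?_) ?_
      · exact Filter.Eventually.of_forall fun y => by
          simpa [Real.norm_eq_abs] using clamp_abs_le (v y)
      · simp
    calc (eLpNorm (fun y => max (-1) (min 1 (v y))) ⊤ volume).toReal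
        ≤ (ENNReal.ofReal 1).toReal := ENNReal.toReal_mono (by simp) h1
      _ = 1 := by simp
  -- key bound for each test function
  have hkey : ∀ᵐ x ∂(volume : Measure (Fin c → ℝ)), ∀ v ∈ S,
      ∫ y, n (x, x - y) * max (-1) (min 1 (v y)) ≤ ‖N‖ := by
    rw [ae_ball_iff hSc]
    intro v hv
    have h2 : ∀ᵐ x ∂(volume : Measure (Fin c → ℝ)), ‖(N (U v)) x‖ ≤ ‖N‖ := by
      filter_upwards [ae_le_eLpNormEssSup (f := ⇑(N (U v))) (μ := (volume : Measure (Fin c → ℝ)))]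
        with x hx
      have hne : eLpNorm (⇑(N (U v))) ⊤ (volume : Measure (Fin c → ℝ)) ≠ ⊤ :=
        Lp.eLpNorm_ne_top _
      have hnorm : ‖N (U v)‖ = (eLpNorm (⇑(N (U v))) ⊤ (volume : Measure (Fin c → ℝ))).toReal :=
        Lp.norm_def _
      have hx' : (‖(N (U v)) x‖₊ : ℝ≥0∞) ≤ eLpNorm (⇑(N (U v))) ⊤ (volume : Measure (Fin c → ℝ)) := by
        rwa [eLpNorm_exponent_top]
      have : ‖(N (U v)) x‖ ≤ ‖N (U v)‖ := by
        rw [hnorm]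
        have := ENNReal.toReal_mono hne hx'
        simpa using this
      refine this.trans ?_
      calc ‖N (U v)‖ ≤ ‖N‖ * ‖U v‖ := N.le_opNorm _
        _ ≤ ‖N‖ * 1 := by
            exact mul_le_mul_of_nonneg_left (hUnorm v) (norm_nonneg N)
        _ = ‖N‖ := mul_one _
    filter_upwards [hN (U v), h2] with x hx1 hx2
    have : ∫ y, n (x, x - y) * (U v) y = ∫ y, n (x, x - y) * max (-1) (min 1 (v y)) :=
      integral_congr_ae ((hUcoe v).mono fun y hy => congrArg (fun t => n (x, x - y) * t) hy)
    rw [← this, ← hx1]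
    exact (le_abs_self _).trans (by simpa [Real.norm_eq_abs] using hx2)
  have hdom2 : ∀ᵐ x ∂(volume : Measure (Fin c → ℝ)),
      ∀ᵐ w ∂(volume : Measure (Fin c → ℝ)), |n (x, w)| ≤ β w := by
    have hdom' : ∀ᵐ z ∂((volume : Measure (Fin c → ℝ)).prod volume), |n z| ≤ β z.2 := by
      rw [← Measure.volume_eq_prod]; exact hdom
    exact Measure.ae_ae_of_ae_prod hdom'
  refine essSup_le_of_ae_le _ ?_
  filter_upwards [hkey, hdom2] with x hx hdx
  refine ENNReal.ofReal_le_ofReal ?_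
  -- change variables
  have hdx' : ∀ᵐ y ∂(volume : Measure (Fin c → ℝ)), |n (x, x - y)| ≤ β (x - y) := by
    have hmap : Measure.map (fun y => x - y) (volume : Measure (Fin c → ℝ)) = volume :=
      Measure.map_sub_left_eq_self volume x
    exact ae_of_ae_map (f := fun y : Fin c → ℝ => x - y)
      (measurable_const.sub measurable_id).aemeasurable (by rwa [hmap])
  have hmeas_g : Measurable fun y => n (x, x - y) :=
    hn.comp (measurable_const.prodMk (measurable_const.sub measurable_id))
  have hβx : Integrable (fun y => β (x - y)) (volume : Measure (Fin c → ℝ)) :=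
    hβ.comp_sub_left x
  have hg_int : Integrable (fun y => n (x, x - y)) (volume : Measure (Fin c → ℝ)) :=
    hβx.mono' hmeas_g.aestronglyMeasurable
      (hdx'.mono fun y hy => by simpa [Real.norm_eq_abs] using hy)
  rw [← integral_sub_left_eq_self (fun w => |n (x, w)|) volume x]
  set g : (Fin c → ℝ) → ℝ := fun y => n (x, x - y) with hg
  -- sign function
  set sgn : (Fin c → ℝ) → ℝ := fun y => if 0 ≤ g y then 1 else -1 with hsgn
  have hsgn_meas : Measurable sgn :=
    Measurable.ite (measurableSet_le measurable_const hmeas_g) measurable_const measurable_const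
  have hsgn_abs : ∀ y, |sgn y| ≤ 1 := by
    intro y; rw [hsgn]; dsimp only; split <;> norm_num
  have hgsgn : ∀ y, g y * sgn y = |g y| := by
    intro y; rw [hsgn]; dsimp only; split
    · rw [mul_one, abs_of_nonneg ‹_›]
    · rw [mul_neg_one, abs_of_neg (lt_of_not_ge ‹_›)]
  have hball : ∀ R : ℕ, ∫ y in Metric.ball (0 : Fin c → ℝ) R, |g y| ≤ ‖N‖ := by
    intro R
    set w : (Fin c → ℝ) → ℝ := (Metric.ball (0 : Fin c → ℝ) R).indicator sgn with hw
    have hw_abs : ∀ y, |w y| ≤ 1 := by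
      intro y; rw [hw]
      by_cases hy : y ∈ Metric.ball (0 : Fin c → ℝ) R
      · rw [Set.indicator_of_mem hy]; exact hsgn_abs y
      · rw [Set.indicator_of_notMem hy]; norm_num
    have hw_int : Integrable w (volume : Measure (Fin c → ℝ)) := by
      refine IntegrableOn.integrable_indicator ?_ measurableSet_ball
      refine Measure.integrableOn_of_bounded (M := 1) (measure_ball_lt_top).ne
        hsgn_meas.aestronglyMeasurable ?_
      exact Filter.Eventually.of_forall fun y => by
        simpa [Real.norm_eq_abs] using hsgn_abs y
    have hw_mem : MemLp w 1 (volume : Measure (Fin c → ℝ)) := memLp_one_iff_integrable.mpr hw_int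
    set W : Lp ℝ 1 (volume : Measure (Fin c → ℝ)) := hw_mem.toLp w with hWdef
    have hWcoe : ⇑W =ᵐ[(volume : Measure (Fin c → ℝ))] w := hw_mem.coeFn_toLp
    obtain ⟨u, hu_mem, hu_lim⟩ := mem_closure_iff_seq_limit.mp (hSd W)
    -- eLpNorm convergence of clamped sequence to w
    have hdist : Filter.Tendsto (fun k => dist (u k) W) Filter.atTop (nhds 0) :=
      tendsto_iff_dist_tendsto_zero.mp hu_lim
    have help1 : ∀ k, eLpNorm (⇑(u k) - ⇑W) 1 (volume : Measure (Fin c → ℝ))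
        = ENNReal.ofReal (dist (u k) W) := by
      intro k
      rw [Lp.dist_def, ENNReal.ofReal_toReal]
      exact (eLpNorm_congr_ae (Lp.coeFn_sub (u k) W).symm).trans_ne (Lp.eLpNorm_ne_top _)
    have help2 : ∀ k, eLpNorm ((fun y => max (-1) (min 1 (u k y))) - w) 1
        (volume : Measure (Fin c → ℝ)) ≤ eLpNorm (⇑(u k) - ⇑W) 1 (volume : Measure (Fin c → ℝ)) := by
      intro k
      refine eLpNorm_mono_ae ?_
      filter_upwards [hWcoe] with y hy
      simp only [Pi.sub_apply, Real.norm_eq_abs]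
      calc |max (-1) (min 1 (u k y)) - w y|
          = |max (-1) (min 1 (u k y)) - max (-1) (min 1 (W y))| := by
            rw [hy, clamp_eq (hw_abs y)]
        _ ≤ |u k y - W y| := clamp_lipschitz _ _
    have hconv : Filter.Tendsto
        (fun k => eLpNorm ((fun y => max (-1) (min 1 (u k y))) - w) 1
          (volume : Measure (Fin c → ℝ))) Filter.atTop (nhds 0) := by
      refine tendsto_of_tendsto_of_tendsto_of_le_of_le tendsto_const_nhds ?_
        (fun k => zero_le) (fun k => (help2 k).trans (le_of_eq (help1 k)))
      have : Filter.Tendsto (fun k => ENNReal.ofReal (dist (u k) W)) Filter.atTop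
          (nhds (ENNReal.ofReal 0)) := (ENNReal.continuous_ofReal.tendsto 0).comp hdist
      simpa using this
    have htim : TendstoInMeasure (volume : Measure (Fin c → ℝ))
        (fun k y => max (-1) (min 1 (u k y))) Filter.atTop w := by
      refine tendstoInMeasure_of_tendsto_eLpNorm one_ne_zero
        (fun k => hclampC.comp_aestronglyMeasurable (Lp.aestronglyMeasurable (u k)))
        hw_int.aestronglyMeasurable hconv
    obtain ⟨ns, hns_mono, hns_ae⟩ := htim.exists_seq_tendsto_ae
    -- dominated convergence
    have hdc : Filter.Tendsto (fun i => ∫ y, g y * max (-1) (min 1 (u (ns i) y)))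
        Filter.atTop (nhds (∫ y, g y * w y)) := by
      refine tendsto_integral_of_dominated_convergence (fun y => |g y|)
        (fun i => hmeas_g.aestronglyMeasurable.mul
          (hclampC.comp_aestronglyMeasurable (Lp.aestronglyMeasurable (u (ns i)))))
        hg_int.abs ?_ ?_
      · intro i
        refine Filter.Eventually.of_forall fun y => ?_
        rw [Real.norm_eq_abs, abs_mul]
        calc |g y| * |max (-1) (min 1 (u (ns i) y))| ≤ |g y| * 1 :=
              mul_le_mul_of_nonneg_left (clamp_abs_le _) (abs_nonneg _)
          _ = |g y| := mul_one _
      · filter_upwards [hns_ae] with y hy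
        exact hy.const_mul (g y)
    have hle : ∫ y, g y * w y ≤ ‖N‖ := by
      refine le_of_tendsto hdc (Filter.Eventually.of_forall fun i => ?_)
      exact hx (u (ns i)) (hu_mem (ns i))
    have hrw : ∫ y, g y * w y = ∫ y in Metric.ball (0 : Fin c → ℝ) R, |g y| := by
      rw [← integral_indicator measurableSet_ball]
      refine integral_congr_ae (Filter.Eventually.of_forall fun y => ?_)
      by_cases hy : y ∈ Metric.ball (0 : Fin c → ℝ) R
      · simp only [hw, Set.indicator_of_mem hy, hgsgn y]
      · simp only [hw, Set.indicator_of_notMem hy, mul_zero]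
    rwa [hrw] at hle
  -- pass to the limit R → ∞
  have hU2 : (⋃ R : ℕ, Metric.ball (0 : Fin c → ℝ) R) = Set.univ := by
    refine Set.eq_univ_of_forall fun y => ?_
    obtain ⟨R, hR⟩ := exists_nat_gt ‖y‖
    exact Set.mem_iUnion.2 ⟨R, by simpa [Metric.mem_ball, dist_zero_right] using hR⟩
  have hmono : Monotone fun R : ℕ => Metric.ball (0 : Fin c → ℝ) R :=
    fun a b hab => Metric.ball_subset_ball (by exact_mod_cast hab)
  have htend := tendsto_setIntegral_of_monotone (fun R : ℕ => measurableSet_ball)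
    hmono (f := fun y => |g y|) (by rw [hU2]; exact hg_int.abs.integrableOn)
  rw [hU2] at htend
  rw [show (∫ y, |g y|) = ∫ y in Set.univ, |g y| from setIntegral_univ.symm]
  exact le_of_tendsto htend (Filter.Eventually.of_forall hball)
end

section
/- Let n be a kernel with |n(x,y)| ≤ β(y) for all (x,y), β ∈ L¹, such that x ↦ n(x, ·) is uniformly continuous from ℝᶜ to L¹(ℝᶜ). Then the induced operator N on L∞(ℝᶜ) satisfies: the map h ↦ S_h N S_{−h} is continuous in the operator norm on L∞, where S_h is translation by h. -/
open MeasureTheory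
open scoped ENNReal

/-- If the kernel `n` is dominated by `β ∈ L¹` and `x ↦ n(x,·)` is uniformly
continuous into `L¹`, then the induced operator `N` on `L∞` is such that
`h ↦ S_h N S_{-h}` is norm continuous.  The operator `S_h N S_{-h}` is encoded
as any bounded operator `T` representing the translated kernel
`(x,y) ↦ n (x-h, y)`. -/
theorem stmt12 (c : ℕ)
    (β : (Fin c → ℝ) → ℝ) (hβ : Integrable β)
    (n : (Fin c → ℝ) × (Fin c → ℝ) → ℝ) (hn : Measurable n)
    (hdom : ∀ x y : Fin c → ℝ, |n (x, y)| ≤ β y)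
    (hucont : ∀ ε > (0 : ℝ), ∃ δ > (0 : ℝ), ∀ x x' : Fin c → ℝ, ‖x - x'‖ < δ →
      ∫ y, |n (x, y) - n (x', y)| < ε)
    (N : Lp ℝ ⊤ (volume : Measure (Fin c → ℝ)) →L[ℝ] Lp ℝ ⊤ volume)
    (hN : ∀ u : Lp ℝ ⊤ (volume : Measure (Fin c → ℝ)),
      ⇑(N u) =ᵐ[volume] fun x => ∫ y, n (x, x - y) * u y) :
    ∀ ε > (0 : ℝ), ∃ δ > (0 : ℝ),
      ∀ (h : Fin c → ℝ) (T : Lp ℝ ⊤ (volume : Measure (Fin c → ℝ)) →L[ℝ] Lp ℝ ⊤ volume),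
        ‖h‖ < δ →
        (∀ u : Lp ℝ ⊤ (volume : Measure (Fin c → ℝ)),
          ⇑(T u) =ᵐ[volume] fun x => ∫ y, n (x - h, x - y) * u y) →
        ‖T - N‖ < ε := by
  intro ε hε
  obtain ⟨δ, hδpos, hδ⟩ := hucont (ε / 2) (by linarith)
  refine ⟨δ, hδpos, ?_⟩
  intro h T hh hT
  -- measurability of slices
  have hmeas : ∀ a : Fin c → ℝ, Measurable fun z => n (a, z) := fun a =>
    hn.comp (measurable_const.prodMk measurable_id)
  -- each slice is integrable
  have hInt : ∀ a : Fin c → ℝ, Integrable fun z => n (a, z) := fun a =>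
    hβ.mono' (hmeas a).aestronglyMeasurable (Filter.Eventually.of_forall fun z => by
      simpa [Real.norm_eq_abs] using hdom a z)
  have key : ‖T - N‖ ≤ ε / 2 := by
    apply ContinuousLinearMap.opNorm_le_bound _ (by linarith)
    intro u
    set C := ‖u‖ with hC
    have hCnn : 0 ≤ C := norm_nonneg u
    -- a.e. bound on u
    have hu_ae : ∀ᵐ y : Fin c → ℝ, ‖(u : (Fin c → ℝ) → ℝ) y‖ ≤ C := by
      have h1 := ae_le_eLpNormEssSup (f := ⇑u) (μ := (volume : Measure (Fin c → ℝ)))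
      have h2 : eLpNormEssSup ⇑u (volume : Measure (Fin c → ℝ)) ≠ ⊤ := by
        rw [← eLpNorm_exponent_top]; exact Lp.eLpNorm_ne_top u
      filter_upwards [h1] with y hy
      have := ENNReal.toReal_mono h2 hy
      simpa [hC, Lp.norm_def, eLpNorm_exponent_top] using this
    -- pointwise bound for every x
    have main : ∀ x : Fin c → ℝ,
        |(∫ y, n (x - h, x - y) * u y) - ∫ y, n (x, x - y) * u y| ≤ ε / 2 * C := by
      intro x
      have hmι : ∀ a : Fin c → ℝ, Measurable fun y => n (a, x - y) :=
        fun a => (hmeas a).comp (measurable_const.sub measurable_id)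
      have hβx : Integrable fun y => β (x - y) := hβ.comp_sub_left x
      have hiu : ∀ a : Fin c → ℝ, Integrable fun y => n (a, x - y) * u y := by
        intro a
        refine Integrable.mono' (hβx.mul_const C)
          ((hmι a).aestronglyMeasurable.mul (Lp.aestronglyMeasurable u)) ?_
        filter_upwards [hu_ae] with y hy
        have := mul_le_mul (hdom a (x - y)) hy (norm_nonneg _)
          ((abs_nonneg _).trans (hdom a (x - y)))
        simpa [Real.norm_eq_abs, abs_mul] using this
      have hΔ : Integrable fun z => |n (x - h, z) - n (x, z)| :=
        ((hInt (x - h)).sub (hInt x)).abs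
      have hΔx : Integrable fun y => |n (x - h, x - y) - n (x, x - y)| :=
        hΔ.comp_sub_left x
      -- the total-variation-type estimate
      have hsmall : ∫ z, |n (x - h, z) - n (x, z)| < ε / 2 := by
        apply hδ
        simpa using hh
      have hsub : ∀ y, n (x - h, x - y) * u y - n (x, x - y) * u y
          = (n (x - h, x - y) - n (x, x - y)) * u y := fun y => (sub_mul _ _ _).symm
      calc |(∫ y, n (x - h, x - y) * u y) - ∫ y, n (x, x - y) * u y|
          = |∫ y, (n (x - h, x - y) - n (x, x - y)) * u y| := by
            rw [← integral_sub (hiu (x - h)) (hiu x)]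
            simp_rw [hsub]
        _ ≤ ∫ y, |n (x - h, x - y) - n (x, x - y)| * |(u : (Fin c → ℝ) → ℝ) y| := by
            simpa [Real.norm_eq_abs, abs_mul] using
              norm_integral_le_integral_norm fun y => (n (x - h, x - y) - n (x, x - y)) * u y
        _ ≤ ∫ y, |n (x - h, x - y) - n (x, x - y)| * C := by
            refine integral_mono_ae ?_ (hΔx.mul_const C) ?_
            · have hI : Integrable fun y => (n (x - h, x - y) - n (x, x - y)) * u y := by
                refine ((hiu (x - h)).sub (hiu x)).congr ?_
                exact Filter.Eventually.of_forall hsub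
              refine hI.abs.congr (Filter.Eventually.of_forall fun y => ?_)
              simp [abs_mul]
            · filter_upwards [hu_ae] with y hy
              exact mul_le_mul_of_nonneg_left (by simpa [Real.norm_eq_abs] using hy)
                (abs_nonneg _)
        _ = (∫ y, |n (x - h, x - y) - n (x, x - y)|) * C := integral_mul_const C _
        _ = (∫ z, |n (x - h, z) - n (x, z)|) * C := by
            rw [integral_sub_left_eq_self (fun z => |n (x - h, z) - n (x, z)|) volume x]
        _ ≤ ε / 2 * C := mul_le_mul_of_nonneg_right hsmall.le hCnn
    -- transfer to Lp norm
    have hv_ae : ⇑((T - N) u) =ᵐ[volume]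
        fun x => (∫ y, n (x - h, x - y) * u y) - ∫ y, n (x, x - y) * u y := by
      have h1 : ⇑((T - N) u) =ᵐ[volume] ⇑(T u) - ⇑(N u) := by
        rw [ContinuousLinearMap.sub_apply]
        exact Lp.coeFn_sub (T u) (N u)
      filter_upwards [h1, hT u, hN u] with x h1 h2 h3
      rw [h1, Pi.sub_apply, h2, h3]
    have hbound : ∀ᵐ x ∂(volume : Measure (Fin c → ℝ)), ‖((T - N) u : (Fin c → ℝ) → ℝ) x‖ ≤ ε / 2 * C := by
      filter_upwards [hv_ae] with x hx
      rw [hx, Real.norm_eq_abs]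
      exact main x
    have := eLpNormEssSup_le_of_ae_bound hbound
    rw [Lp.norm_def, eLpNorm_exponent_top]
    exact ENNReal.toReal_le_of_le_ofReal (by positivity) this
  linarith
end
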